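/- arXiv:1801.07761 — 4 statements merged into one kernel-verified Lean document; each statement's English description precedes it below -/
import Mathlib

section
/- If Γ = (z_m) is a uniformly discrete sequence in the unit disc with separation constant δ (i.e. the pseudohyperbolic distance ρ(z_n,z_m) ≥ δ for all n ≠ m), then ∑_{m=1}^∞ (1-|z_m|^2)^2 ≤ 4/δ^2. -/
open MeasureTheory Complex
open scoped ENNReal NNReal

noncomputable section

/-- Pseudohyperbolic distance on the unit disc. -/
def pd (z w : ℂ) : ℝ := ‖z - w‖ / ‖1 - (starRingEnd ℂ) w * z‖

lemma key_id (z w : ℂ) :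
    ‖1 - (starRingEnd ℂ) w * z‖ ^ 2 - ‖z - w‖ ^ 2
      = (1 - ‖z‖ ^ 2) * (1 - ‖w‖ ^ 2) := by
  simp only [Complex.sq_norm, Complex.normSq_apply, Complex.sub_re, Complex.sub_im,
    Complex.mul_re, Complex.mul_im, Complex.one_re, Complex.one_im,
    Complex.conj_re, Complex.conj_im]
  ring

lemma pd_lt_one {z w : ℂ} (hz : ‖z‖ < 1) (hw : ‖w‖ < 1) :
    pd z w < 1 := by
  have h := key_id z w
  have h1 : 0 < (1 - ‖z‖ ^ 2) * (1 - ‖w‖ ^ 2) :=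
    mul_pos (by nlinarith [norm_nonneg z]) (by nlinarith [norm_nonneg w])
  have hA : (0:ℝ) ≤ ‖z - w‖ := norm_nonneg _
  have hBnn : (0:ℝ) ≤ ‖1 - (starRingEnd ℂ) w * z‖ := norm_nonneg _
  have hB : 0 < ‖1 - (starRingEnd ℂ) w * z‖ := by
    nlinarith [sq_nonneg (‖z - w‖)]
  rw [pd, div_lt_one hB]
  nlinarith [sq_nonneg (‖z - w‖ + ‖1 - (starRingEnd ℂ) w * z‖)]

theorem stmt1 (z : ℕ → ℂ) (hz : ∀ m, z m ∈ Metric.ball (0:ℂ) 1)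
    (δ : ℝ) (hδ : 0 < δ) (hsep : ∀ n m, n ≠ m → δ ≤ pd (z n) (z m)) :
    ∑' m : ℕ, ENNReal.ofReal ((1 - ‖z m‖ ^ 2) ^ 2) ≤ ENNReal.ofReal (4 / δ ^ 2) := by
  have habs : ∀ m, ‖z m‖ < 1 := by
    intro m; have := hz m
    simpa [Metric.mem_ball, Complex.dist_eq] using this
  have habs0 : ∀ m, (0:ℝ) ≤ ‖z m‖ := fun m => norm_nonneg _
  have hδ1 : δ < 1 :=
    lt_of_le_of_lt (hsep 0 1 (by norm_num)) (pd_lt_one (habs 0) (habs 1))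
  set r : ℕ → ℝ := fun m => (δ / 2) * (1 - ‖z m‖ ^ 2) with hr
  -- separation
  have hsep' : ∀ n m, n ≠ m → r n + r m ≤ ‖z n - z m‖ := by
    intro n m hnm
    have h := key_id (z n) (z m)
    have h1 : 0 < (1 - ‖z n‖ ^ 2) * (1 - ‖z m‖ ^ 2) :=
      mul_pos (by nlinarith [habs n, habs0 n]) (by nlinarith [habs m, habs0 m])
    have hA : (0:ℝ) ≤ ‖z n - z m‖ := norm_nonneg _
    have hBnn : (0:ℝ) ≤ ‖1 - (starRingEnd ℂ) (z m) * (z n)‖ := norm_nonneg _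
    have hB : 0 < ‖1 - (starRingEnd ℂ) (z m) * (z n)‖ := by
      nlinarith [sq_nonneg (‖z n - z m‖)]
    have h2 : δ * ‖1 - (starRingEnd ℂ) (z m) * (z n)‖ ≤ ‖z n - z m‖ := by
      have := hsep n m hnm
      rw [pd, le_div_iff₀ hB] at this
      linarith
    have h3 : 1 - ‖z m‖ * ‖z n‖
        ≤ ‖1 - (starRingEnd ℂ) (z m) * (z n)‖ := by
      have := norm_sub_norm_le (1:ℂ) ((starRingEnd ℂ) (z m) * (z n))
      simpa [norm_mul, Complex.norm_conj] using this
    have h4 : (1 - ‖z n‖ ^ 2) / 2 + (1 - ‖z m‖ ^ 2) / 2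
        ≤ 1 - ‖z m‖ * ‖z n‖ := by
      nlinarith [sq_nonneg (‖z n‖ - ‖z m‖)]
    have h6 := mul_le_mul_of_nonneg_left (h4.trans (h3.trans (le_refl _))) hδ.le
    have h7 : δ * ‖1 - (starRingEnd ℂ) (z m) * (z n)‖ ≤ ‖z n - z m‖ := h2
    have h8 := mul_le_mul_of_nonneg_left h3 hδ.le
    simp only [hr]
    nlinarith [mul_le_mul_of_nonneg_left h4 hδ.le]
  have hrpos : ∀ m, 0 < r m := by
    intro m
    have h1 : ‖z m‖ ^ 2 < 1 := by nlinarith [habs m, habs0 m]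
    simp only [hr]
    exact mul_pos (by linarith) (by linarith)
  have hdisj : Pairwise (Function.onFun Disjoint (fun m => Metric.ball (z m) (r m))) := by
    intro n m hnm
    rw [Function.onFun, Set.disjoint_left]
    intro x hxn hxm
    rw [Metric.mem_ball] at hxn hxm
    have := hsep' n m hnm
    have hd : dist (z n) (z m) ≤ dist x (z n) + dist x (z m) := by
      rw [dist_comm x (z n)]; exact dist_triangle _ _ _
    rw [Complex.dist_eq] at hd
    linarith
  have hsub : ∀ m, Metric.ball (z m) (r m) ⊆ Metric.ball (0:ℂ) 1 := by
    intro m x hx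
    rw [Metric.mem_ball, Complex.dist_eq] at hx ⊢
    have h5 : ‖x‖ ≤ ‖x - z m‖ + ‖z m‖ := by
      simpa using norm_add_le (x - z m) (z m)
    have ha := habs m; have ha0 := habs0 m
    have h6 : δ * ‖z m‖ ≤ δ := by nlinarith
    simp only [hr] at hx
    simp only [sub_zero]
    nlinarith [mul_pos (show (0:ℝ) < 1 - ‖z m‖ by linarith)
      (show (0:ℝ) < 1 - δ/2*(1+‖z m‖) by linarith)]
  have hmeas : ∑' m, volume (Metric.ball (z m) (r m)) ≤ volume (Metric.ball (0:ℂ) 1) := by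
    rw [← measure_iUnion hdisj (fun m => measurableSet_ball)]
    exact measure_mono (Set.iUnion_subset hsub)
  simp only [Complex.volume_ball] at hmeas
  rw [ENNReal.tsum_mul_right, ENNReal.mul_le_mul_iff_left (by simp [NNReal.pi_ne_zero])
    ENNReal.coe_ne_top] at hmeas
  have hS : ∑' m, ENNReal.ofReal (r m ^ 2) ≤ 1 := by
    calc ∑' m, ENNReal.ofReal (r m ^ 2) = ∑' m, ENNReal.ofReal (r m) ^ 2 := by
          congr 1; funext m
          rw [← ENNReal.ofReal_pow (hrpos m).le]
      _ ≤ ENNReal.ofReal 1 ^ 2 := hmeas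
      _ = 1 := by simp
  calc ∑' m, ENNReal.ofReal ((1 - ‖z m‖ ^ 2) ^ 2)
      = ∑' m, ENNReal.ofReal (4 / δ ^ 2) * ENNReal.ofReal (r m ^ 2) := by
        congr 1; funext m
        rw [← ENNReal.ofReal_mul (by positivity)]
        congr 1
        simp only [hr]
        field_simp
        ring
    _ = ENNReal.ofReal (4 / δ ^ 2) * ∑' m, ENNReal.ofReal (r m ^ 2) := ENNReal.tsum_mul_left
    _ ≤ ENNReal.ofReal (4 / δ ^ 2) * 1 := mul_le_mul_right hS _
    _ = ENNReal.ofReal (4 / δ ^ 2) := mul_one _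
end
end

section
/- If Γ is uniformly discrete with separation constant δ, then for every z in the unit disc and every 0<r<1, the number n(Γ,z,r) of points of Γ in the pseudohyperbolic disc E(z,r) satisfies n(Γ,z,r) ≤ (2/δ + 1)^2 · 1/(1-r^2). -/
open MeasureTheory Complex

noncomputable section

open Set ENNReal

def mob (a ζ : ℂ) : ℂ := (a - ζ) / (1 - (starRingEnd ℂ) a * ζ)

def hypm : Measure ℂ := volume.withDensity fun ζ => ENNReal.ofReal (((1 - ‖ζ‖^2)⁻¹)^2)

lemma denom_ne (a z : ℂ) (ha : ‖a‖ < 1) (hz : ‖z‖ < 1) :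
    1 - (starRingEnd ℂ) a * z ≠ 0 := by
  intro h
  have : ‖(starRingEnd ℂ) a * z‖ < 1 := by
    rw [norm_mul, Complex.norm_conj]; nlinarith [norm_nonneg a, norm_nonneg z]
  have h2 : (1 : ℂ) = (starRingEnd ℂ) a * z := by linear_combination h
  rw [← h2] at this; simp at this

lemma normSq_key (a z : ℂ) : normSq (1 - (starRingEnd ℂ) a * z) - normSq (a - z) = (1 - normSq a) * (1 - normSq z) := by
  simp only [normSq_apply, Complex.sub_re, Complex.sub_im, Complex.mul_re, Complex.mul_im,
    Complex.one_re, Complex.one_im, Complex.conj_re, Complex.conj_im]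
  ring

lemma normSq_lt_one (a : ℂ) (ha : ‖a‖ < 1) : normSq a < 1 := by
  rw [← Complex.sq_norm]; nlinarith [norm_nonneg a]

lemma mob_lt_one (a z : ℂ) (ha : ‖a‖ < 1) (hz : ‖z‖ < 1) :
    ‖mob a z‖ < 1 := by
  have hd := denom_ne a z ha hz
  have hdpos : 0 < ‖1 - (starRingEnd ℂ) a * z‖ := norm_pos_iff.mpr hd
  rw [mob, norm_div, div_lt_one hdpos]
  have hk := normSq_key a z
  have h1 := normSq_lt_one a ha
  have h2 := normSq_lt_one z hz
  have h3 : normSq (a - z) < normSq (1 - (starRingEnd ℂ) a * z) := by nlinarith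
  have := Real.sqrt_lt_sqrt (normSq_nonneg (a - z)) h3
  rwa [← Complex.norm_def, ← Complex.norm_def] at this

lemma mob_invol (a z : ℂ) (ha : ‖a‖ < 1) (hz : ‖z‖ < 1) :
    mob a (mob a z) = z := by
  have hd := denom_ne a z ha hz
  have haa : 1 - a * (starRingEnd ℂ) a ≠ 0 := by
    intro h
    have := denom_ne a a ha ha
    apply this; linear_combination h + (mul_comm ((starRingEnd ℂ) a) a)
  rw [mob, mob]
  have haa' : 1 - (starRingEnd ℂ) a * a ≠ 0 := by rwa [mul_comm]
  have e1 : a - (a - z) / (1 - (starRingEnd ℂ) a * z) = z * (1 - (starRingEnd ℂ) a * a) / (1 - (starRingEnd ℂ) a * z) := by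
    rw [eq_div_iff hd, sub_mul, div_mul_cancel₀ _ hd]; ring
  have e2 : 1 - (starRingEnd ℂ) a * ((a - z) / (1 - (starRingEnd ℂ) a * z)) = (1 - (starRingEnd ℂ) a * a) / (1 - (starRingEnd ℂ) a * z) := by
    rw [eq_div_iff hd, sub_mul, mul_div_assoc', div_mul_cancel₀ _ hd]; ring
  rw [e1, e2, div_div_div_cancel_right₀ hd, mul_div_cancel_right₀ _ haa']

-- conj-swap abs
lemma abs_one_sub_conj (u v : ℂ) : ‖1 - (starRingEnd ℂ) u * v‖
    = ‖1 - (starRingEnd ℂ) v * u‖ := by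
  rw [← Complex.norm_conj (1 - (starRingEnd ℂ) u * v)]
  simp [map_sub, map_mul, mul_comm]

lemma pd_eq_abs_mob (u w : ℂ) : pd u w = ‖mob w u‖ := by
  rw [pd, mob, norm_div, norm_sub_rev w u]

lemma pd_symm (u v : ℂ) : pd u v = pd v u := by
  rw [pd, pd, norm_sub_rev, abs_one_sub_conj]

lemma pd_mob (a u v : ℂ) (ha : ‖a‖ < 1) (hu : ‖u‖ < 1) (hv : ‖v‖ < 1) :
    pd (mob a u) (mob a v) = pd u v := by
  have hdu := denom_ne a u ha hu
  have hdv := denom_ne a v ha hv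
  have hdu' : 1 - u * (starRingEnd ℂ) a ≠ 0 := by
    intro h; exact hdu (by linear_combination h + mul_comm u ((starRingEnd ℂ) a))
  have hdv' : 1 - v * (starRingEnd ℂ) a ≠ 0 := by
    intro h; exact hdv (by linear_combination h + mul_comm v ((starRingEnd ℂ) a))
  have h1 : mob a u - mob a v = ((v - u) * (1 - (starRingEnd ℂ) a * a)) /
      ((1 - (starRingEnd ℂ) a * u) * (1 - (starRingEnd ℂ) a * v)) := by
    rw [mob, mob]; field_simp; ring
  have hconj : (starRingEnd ℂ) (mob a v) = ((starRingEnd ℂ) a - (starRingEnd ℂ) v) / (1 - a * (starRingEnd ℂ) v) := by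
    rw [mob, map_div₀, map_sub, map_sub, map_mul, map_one, Complex.conj_conj]
  have hdv2 : 1 - a * (starRingEnd ℂ) v ≠ 0 := by
    intro h
    apply denom_ne a v ha hv
    have := congrArg (starRingEnd ℂ) h
    simpa [map_sub, map_mul] using this
  have h2 : 1 - (starRingEnd ℂ) (mob a v) * mob a u = ((1 - (starRingEnd ℂ) a * a) * (1 - (starRingEnd ℂ) v * u)) /
      ((1 - a * (starRingEnd ℂ) v) * (1 - (starRingEnd ℂ) a * u)) := by
    rw [hconj, mob]; rw [div_mul_div_comm, eq_div_iff (mul_ne_zero hdv2 hdu)]; rw [sub_mul, div_mul_cancel₀ _ (mul_ne_zero hdv2 hdu)]; ring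
  rw [pd, h1, h2, norm_div, norm_div, norm_mul, norm_mul, norm_mul, norm_mul]
  have haa : ‖1 - (starRingEnd ℂ) a * a‖ ≠ 0 :=
    norm_ne_zero_iff.mpr (denom_ne a a ha ha)
  have e1 : ‖1 - a * (starRingEnd ℂ) v‖ = ‖1 - (starRingEnd ℂ) a * v‖ := by
    rw [← Complex.norm_conj (1 - a * (starRingEnd ℂ) v)]
    congr 1
    simp [map_sub, map_mul]
  have hbu : ‖1 - u * (starRingEnd ℂ) a‖ ≠ 0 := norm_ne_zero_iff.mpr hdu'
  have hbv : ‖1 - v * (starRingEnd ℂ) a‖ ≠ 0 := norm_ne_zero_iff.mpr hdv'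
  have hD : ‖1 - u * (starRingEnd ℂ) v‖ ≠ 0 := by
    apply norm_ne_zero_iff.mpr
    intro h
    apply denom_ne u v hu hv
    have := congrArg (starRingEnd ℂ) h
    simpa [map_sub, map_mul, mul_comm] using this
  rw [pd, norm_sub_rev v u]
  field_simp [e1, haa, hbu, hbv, hD, norm_ne_zero_iff.mpr hdu, norm_ne_zero_iff.mpr hdv,
    norm_ne_zero_iff.mpr (denom_ne v u hv hu)]
  ring
  rw [e1, mul_comm v]

lemma pd_nonneg (u v : ℂ) : 0 ≤ pd u v := by
  unfold pd; positivity

lemma pd_lt_one_s2 (u v : ℂ) (hu : ‖u‖ < 1) (hv : ‖v‖ < 1) :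
    pd u v < 1 := by
  rw [pd_eq_abs_mob]; exact mob_lt_one v u hv hu

-- base strong triangle at 0
lemma pd_base (u v : ℂ) (hu : ‖u‖ < 1) (hv : ‖v‖ < 1) :
    pd u v * (1 + ‖u‖ * ‖v‖) ≤ ‖u‖ + ‖v‖ := by
  have hd : 1 - (starRingEnd ℂ) v * u ≠ 0 := denom_ne v u hv hu
  have hdpos : 0 < ‖1 - (starRingEnd ℂ) v * u‖ := norm_pos_iff.mpr hd
  rw [pd, div_mul_eq_mul_div, div_le_iff₀ hdpos]
  set p := ‖u‖
  set q := ‖v‖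
  set x := (u * (starRingEnd ℂ) v).re with hxdef
  have hp0 : 0 ≤ p := norm_nonneg u
  have hq0 : 0 ≤ q := norm_nonneg v
  have hxb : |x| ≤ p * q := by
    calc |x| ≤ ‖u * (starRingEnd ℂ) v‖ := Complex.abs_re_le_norm _
      _ = p * q := by rw [norm_mul, Complex.norm_conj]
  have h1 : ‖u - v‖ ^ 2 = p^2 + q^2 - 2*x := by
    rw [Complex.sq_norm, Complex.normSq_sub, ← Complex.sq_norm, ← Complex.sq_norm]
  have h2 : ‖1 - (starRingEnd ℂ) v * u‖ ^ 2 = 1 - 2*x + p^2*q^2 := by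
    rw [Complex.sq_norm, Complex.normSq_sub]
    simp only [normSq_one, map_mul, Complex.normSq_conj, one_mul, Complex.conj_conj]
    have hre : (v * (starRingEnd ℂ) u).re = x := by
      rw [hxdef]; simp [Complex.mul_re]; ring
    rw [hre, ← Complex.sq_norm u, ← Complex.sq_norm v]; ring
  have hxb' := abs_le.mp hxb
  have key : (‖u - v‖ * (1 + p*q))^2 ≤ ((p + q) * ‖1 - (starRingEnd ℂ) v * u‖)^2 := by
    rw [mul_pow, mul_pow, h1, h2]
    nlinarith [hxb'.1, hxb'.2, mul_nonneg (mul_nonneg (by nlinarith : (0:ℝ) ≤ 1 - p^2) (by nlinarith : (0:ℝ) ≤ 1 - q^2)) (by nlinarith : (0:ℝ) ≤ x + p*q)]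
  have hL : 0 ≤ ‖u - v‖ * (1 + p*q) := by positivity
  have hR : 0 ≤ (p + q) * ‖1 - (starRingEnd ℂ) v * u‖ := by positivity
  exact (pow_le_pow_iff_left₀ hL hR (by norm_num)).mp key


lemma pd_triangle (u v w : ℂ) (hu : ‖u‖ < 1) (hv : ‖v‖ < 1)
    (hw : ‖w‖ < 1) :
    pd u v * (1 + pd u w * pd w v) ≤ pd u w + pd w v := by
  have h1 : pd u v = pd (mob w u) (mob w v) := (pd_mob w u v hw hu hv).symm
  have h2 : pd u w = ‖mob w u‖ := pd_eq_abs_mob u w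
  have h3 : pd w v = ‖mob w v‖ := by rw [pd_symm, pd_eq_abs_mob]
  rw [h1, h2, h3]
  exact pd_base (mob w u) (mob w v) (mob_lt_one w u hw hu) (mob_lt_one w v hw hv)

lemma deriv_piece (y : ℝ) (h : (1:ℝ) - y^2 ≠ 0) :
    HasDerivAt (fun y : ℝ => (2 * (1 - y^2))⁻¹) (y * ((1 - y^2)⁻¹)^2) y := by
  have h2 : (2:ℝ) * (1 - y^2) ≠ 0 := by simpa using h
  have hu : HasDerivAt (fun y : ℝ => 2 * (1 - y^2)) (2 * -((2:ℕ) * y ^ (2 - 1))) y :=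
    (((hasDerivAt_pow 2 y).const_sub 1)).const_mul 2
  have := hu.inv h2
  refine this.congr_deriv ?_
  field_simp
  ring

lemma ftc_piece (s : ℝ) (hs0 : 0 ≤ s) (hs1 : s < 1) :
    ∫ y in (0:ℝ)..s, y * ((1 - y^2)⁻¹)^2 = s^2 / (2 * (1 - s^2)) := by
  have hne : ∀ y ∈ Set.uIcc (0:ℝ) s, (1:ℝ) - y^2 ≠ 0 := by
    intro y hy
    rw [Set.uIcc_of_le hs0] at hy
    nlinarith [hy.1, hy.2]
  have hcont : ContinuousOn (fun y : ℝ => y * ((1 - y^2)⁻¹)^2) (Set.uIcc 0 s) := by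
    apply ContinuousOn.mul continuousOn_id
    apply ContinuousOn.pow
    exact ContinuousOn.inv₀ (by fun_prop) hne
  have := intervalIntegral.integral_eq_sub_of_hasDerivAt
    (fun y hy => deriv_piece y (hne y hy)) (hcont.intervalIntegrable)
  rw [this]
  have h1 : (1:ℝ) - s^2 ≠ 0 := by nlinarith
  field_simp
  ring

lemma hypm_ball (s : ℝ) (hs0 : 0 ≤ s) (hs1 : s < 1) :
    hypm (Metric.ball (0:ℂ) s) = ENNReal.ofReal (Real.pi * s^2 / (1 - s^2)) := by
  have hmb : MeasurableSet (Metric.ball (0:ℂ) s) := measurableSet_ball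
  rw [hypm, withDensity_apply _ hmb]
  set f : ℝ → ℝ := (Set.Iio s).indicator (fun y => ((1 - y^2)⁻¹)^2) with hf
  have hpt : ∀ ζ : ℂ, Set.indicator (Metric.ball (0:ℂ) s) (fun ζ : ℂ => ((1 - ‖ζ‖^2)⁻¹)^2) ζ = f ‖ζ‖ := by
    intro ζ
    by_cases h : ζ ∈ Metric.ball (0:ℂ) s
    · rw [Set.indicator_of_mem h, hf, Set.indicator_of_mem (by simpa [mem_ball_zero_iff] using h)]
    · rw [Set.indicator_of_notMem h, hf, Set.indicator_of_notMem (by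
        simp only [Set.mem_Iio, not_lt]
        simpa [mem_ball_zero_iff, not_lt] using h)]
  have hcont : ContinuousOn (fun ζ : ℂ => ((1 - ‖ζ‖^2)⁻¹)^2) (Metric.closedBall (0:ℂ) s) := by
    apply ContinuousOn.pow
    apply ContinuousOn.inv₀ (by fun_prop)
    intro ζ hζ
    rw [Metric.mem_closedBall, dist_zero_right] at hζ
    nlinarith [norm_nonneg ζ, hζ]
  have hint : IntegrableOn (fun ζ : ℂ => ((1 - ‖ζ‖^2)⁻¹)^2) (Metric.ball (0:ℂ) s) :=
    (hcont.integrableOn_compact (isCompact_closedBall _ _)).mono_set Metric.ball_subset_closedBall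
  have hnn : 0 ≤ᵐ[volume.restrict (Metric.ball (0:ℂ) s)] fun ζ : ℂ => ((1 - ‖ζ‖^2)⁻¹)^2 := by
    filter_upwards with ζ; positivity
  rw [← ofReal_integral_eq_lintegral_ofReal hint hnn]
  congr 1
  have step1 : ∫ ζ in Metric.ball (0:ℂ) s, ((1 - ‖ζ‖^2)⁻¹)^2 = ∫ ζ : ℂ, f ‖ζ‖ := by
    rw [← integral_indicator hmb]
    exact integral_congr_ae (Filter.Eventually.of_forall hpt)
  rw [step1, integral_fun_norm_addHaar volume f, Complex.finrank_real_complex]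
  have hball : volume.real (Metric.ball (0:ℂ) 1) = Real.pi := by
    rw [Measure.real, Complex.volume_ball]
    simp [ENNReal.toReal_mul]
  rw [hball]
  have h1 : ∀ y : ℝ, y ^ (2-1) • f y
      = Set.indicator (Set.Iio s) (fun y => y * ((1 - y^2)⁻¹)^2) y := by
    intro y
    simp only [hf, show (2:ℕ)-1 = 1 from rfl, pow_one, smul_eq_mul]
    exact (Set.indicator_mul_right (Set.Iio s) (fun y => y) (fun y => ((1 - y^2)⁻¹)^2)).symm
  have hys : ∫ y in Set.Ioi (0:ℝ), y ^ (2-1) • f y = s^2 / (2 * (1 - s^2)) := by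
    rw [integral_congr_ae (Filter.Eventually.of_forall fun y => h1 y)]
    rw [integral_indicator measurableSet_Iio, Measure.restrict_restrict measurableSet_Iio]
    have : Set.Iio s ∩ Set.Ioi 0 = Set.Ioo 0 s := by ext y; simp [and_comm]
    rw [this, ← integral_Ioc_eq_integral_Ioo, ← intervalIntegral.integral_of_le hs0]
    exact ftc_piece s hs0 hs1
  rw [hys, nsmul_eq_mul, smul_eq_mul]
  have h2 : (1:ℝ) - s^2 ≠ 0 := by nlinarith
  field_simp
  ring

lemma mob_hasDerivAt (a x : ℂ) (h : 1 - (starRingEnd ℂ) a * x ≠ 0) :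
    HasDerivAt (mob a) (((starRingEnd ℂ) a * a - 1) / (1 - (starRingEnd ℂ) a * x)^2) x := by
  have hu : HasDerivAt (fun z : ℂ => a - z) (-1) x := by
    simpa using (hasDerivAt_id x).const_sub a
  have hv : HasDerivAt (fun z : ℂ => 1 - (starRingEnd ℂ) a * z) (-((starRingEnd ℂ) a)) x := by
    simpa using ((hasDerivAt_id x).const_mul ((starRingEnd ℂ) a)).const_sub 1
  have := hu.div hv h
  refine this.congr_deriv ?_
  field_simp
  ring

def mobD (a x : ℂ) : ℂ →L[ℝ] ℂ :=
  (ContinuousLinearMap.smulRight (1 : ℂ →L[ℂ] ℂ)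
    (((starRingEnd ℂ) a * a - 1) / (1 - (starRingEnd ℂ) a * x)^2)).restrictScalars ℝ

lemma mobD_det (a x : ℂ) : (mobD a x).det
    = normSq (((starRingEnd ℂ) a * a - 1) / (1 - (starRingEnd ℂ) a * x)^2) := by
  set c := ((starRingEnd ℂ) a * a - 1) / (1 - (starRingEnd ℂ) a * x)^2
  have : (mobD a x).toLinearMap = LinearMap.mul ℝ ℂ c := by
    ext z
    simp only [mobD, ContinuousLinearMap.coe_restrictScalars, ContinuousLinearMap.coe_coe,
      ContinuousLinearMap.smulRight_apply, ContinuousLinearMap.one_apply, smul_eq_mul,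
      LinearMap.mul_apply', LinearMap.coe_restrictScalars]
    ring
  rw [ContinuousLinearMap.det, this]
  exact (Algebra.norm_apply ℝ c ▸ Algebra.norm_complex_apply c : _)

lemma hypm_mob_image (a : ℂ) (ha : ‖a‖ < 1) (s : ℝ) (hs0 : 0 ≤ s) (hs1 : s < 1) :
    hypm (mob a '' Metric.ball (0:ℂ) s) = hypm (Metric.ball (0:ℂ) s) := by
  have hmb : MeasurableSet (Metric.ball (0:ℂ) s) := measurableSet_ball
  have hden : ∀ x ∈ Metric.ball (0:ℂ) s, 1 - (starRingEnd ℂ) a * x ≠ 0 := by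
    intro x hx
    exact denom_ne a x ha (lt_of_lt_of_le (by simpa [mem_ball_zero_iff] using hx) hs1.le)
  have hf' : ∀ x ∈ Metric.ball (0:ℂ) s, HasFDerivWithinAt (mob a) (mobD a x) (Metric.ball (0:ℂ) s) x := by
    intro x hx
    exact (((mob_hasDerivAt a x (hden x hx)).hasFDerivAt).restrictScalars ℝ).hasFDerivWithinAt
  have hinj : Set.InjOn (mob a) (Metric.ball (0:ℂ) s) := by
    intro x hx y hy hxy
    have hx1 : ‖x‖ < 1 := lt_of_lt_of_le (by simpa [mem_ball_zero_iff] using hx) hs1.le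
    have hy1 : ‖y‖ < 1 := lt_of_lt_of_le (by simpa [mem_ball_zero_iff] using hy) hs1.le
    rw [← mob_invol a x ha hx1, ← mob_invol a y ha hy1, hxy]
  have himg : MeasurableSet (mob a '' Metric.ball (0:ℂ) s) :=
    measurable_image_of_fderivWithin hmb hf' hinj
  rw [hypm, withDensity_apply _ himg, withDensity_apply _ hmb,
    lintegral_image_eq_lintegral_abs_det_fderiv_mul volume hmb hf' hinj]
  apply setLIntegral_congr_fun hmb
  intro x hx
  beta_reduce
  have hx1 : ‖x‖ < 1 := lt_of_lt_of_le (by simpa [mem_ball_zero_iff] using hx) hs1.le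
  have hd := hden x hx
  have hnsd : normSq (1 - (starRingEnd ℂ) a * x) ≠ 0 := by
    simpa [normSq_eq_zero] using hd
  have hna : normSq a < 1 := by
    rw [← Complex.sq_norm]; nlinarith [norm_nonneg a]
  have hnx : normSq x < 1 := by
    rw [← Complex.sq_norm]; nlinarith [norm_nonneg x]
  rw [mobD_det]
  -- compute |det|
  have hdet : |normSq (((starRingEnd ℂ) a * a - 1) / (1 - (starRingEnd ℂ) a * x)^2)|
      = (1 - normSq a)^2 / (normSq (1 - (starRingEnd ℂ) a * x))^2 := by
    rw [_root_.abs_of_nonneg (normSq_nonneg _), normSq_div, map_pow]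
    congr 1
    have : (starRingEnd ℂ) a * a - 1 = -(1 - (starRingEnd ℂ) a * a) := by ring
    rw [this, normSq_neg]
    have hkey := normSq_key a a
    have : normSq (1 - (starRingEnd ℂ) a * a) = (1 - normSq a)^2 := by
      have haa : normSq (a - a) = 0 := by simp
      nlinarith [hkey, haa]
    rw [this]
  rw [hdet]
  -- compute 1 - ‖mob a x‖²
  have hmobsq : 1 - ‖mob a x‖^2 = (1 - normSq a) * (1 - normSq x) / normSq (1 - (starRingEnd ℂ) a * x) := by
    have : ‖mob a x‖^2 = normSq (a - x) / normSq (1 - (starRingEnd ℂ) a * x) := by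
      rw [Complex.sq_norm, mob, normSq_div]
    rw [this, eq_div_iff hnsd, sub_mul, div_mul_cancel₀ _ hnsd]
    linarith [normSq_key a x]
  have hxnorm : 1 - ‖x‖^2 = 1 - normSq x := by rw [Complex.sq_norm]
  rw [hmobsq, hxnorm, ← ENNReal.ofReal_mul (by positivity)]
  congr 1
  have hpos1 : (0:ℝ) < 1 - normSq a := by linarith
  have hpos2 : (0:ℝ) < 1 - normSq x := by linarith
  have hpos3 : (0:ℝ) < normSq (1 - (starRingEnd ℂ) a * x) :=
    lt_of_le_of_ne (normSq_nonneg _) (Ne.symm hnsd)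
  field_simp

lemma mem_mob_image (a ζ : ℂ) (ha : ‖a‖ < 1) (s : ℝ) (hs1 : s ≤ 1) :
    ζ ∈ mob a '' Metric.ball (0:ℂ) s ↔ ‖ζ‖ < 1 ∧ pd ζ a < s := by
  constructor
  · rintro ⟨x, hx, rfl⟩
    rw [mem_ball_zero_iff] at hx
    have hx1 : ‖x‖ < 1 := lt_of_lt_of_le hx hs1
    refine ⟨mob_lt_one a x ha hx1, ?_⟩
    rw [pd_eq_abs_mob, mob_invol a x ha hx1]
    exact hx
  · rintro ⟨h1, h2⟩
    refine ⟨mob a ζ, ?_, mob_invol a ζ ha h1⟩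
    rw [mem_ball_zero_iff, ← pd_eq_abs_mob]
    exact h2

lemma isOpen_mob_image (a : ℂ) (ha : ‖a‖ < 1) (s : ℝ) (hs1 : s ≤ 1) :
    MeasurableSet (mob a '' Metric.ball (0:ℂ) s) := by
  have heq : mob a '' Metric.ball (0:ℂ) s
      = {ζ : ℂ | ‖ζ‖ < 1} ∩ (fun ζ => ‖mob a ζ‖) ⁻¹' (Set.Iio s) := by
    ext ζ
    rw [mem_mob_image a ζ ha s hs1]
    constructor
    · rintro ⟨h1, h2⟩
      exact ⟨h1, by rwa [Set.mem_preimage, Set.mem_Iio, ← pd_eq_abs_mob]⟩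
    · rintro ⟨h1, h2⟩
      rw [Set.mem_preimage, Set.mem_Iio, ← pd_eq_abs_mob] at h2
      exact ⟨h1, h2⟩
  apply IsOpen.measurableSet
  rw [heq]
  have hopen : IsOpen {ζ : ℂ | ‖ζ‖ < 1} := by
    have : {ζ : ℂ | ‖ζ‖ < 1} = Metric.ball (0:ℂ) 1 := by
      ext ζ; simp [mem_ball_zero_iff]
    rw [this]; exact Metric.isOpen_ball
  apply ContinuousOn.isOpen_inter_preimage ?_ hopen isOpen_Iio
  apply continuous_norm.comp_continuousOn
  apply ContinuousOn.div (by fun_prop) (by fun_prop)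
  intro ζ hζ
  exact denom_ne a ζ ha hζ

lemma final_arith (t r : ℝ) (ht0 : 0 < t) (ht1 : t < 1) (hr0 : 0 < r) (hr1 : r < 1) :
    (Real.pi * ((r+t)/(1+r*t))^2 / (1 - ((r+t)/(1+r*t))^2)) / (Real.pi * t^2/(1-t^2))
      ≤ ((1+t)/t)^2 * (1/(1-r^2)) := by
  have hrt0 : (0:ℝ) < 1 + r * t := by nlinarith
  have hr2 : (0:ℝ) < 1 - r^2 := by nlinarith
  have ht2 : (0:ℝ) < 1 - t^2 := by nlinarith
  have hpi := Real.pi_pos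
  have h1 : 1 - ((r+t)/(1+r*t))^2 = (1-r^2)*(1-t^2)/(1+r*t)^2 := by
    field_simp
    ring
  rw [h1]
  have h2 : (Real.pi * ((r+t)/(1+r*t))^2 / ((1-r^2)*(1-t^2)/(1+r*t)^2)) / (Real.pi * t^2/(1-t^2))
      = (r+t)^2 / ((1-r^2) * t^2) := by
    field_simp
  rw [h2]
  have h3 : ((1+t)/t)^2 * (1/(1-r^2)) = (1+t)^2 / ((1-r^2) * t^2) := by
    field_simp
  rw [h3]
  gcongr
  all_goals nlinarith

theorem stmt2 (zs : ℕ → ℂ) (hz : ∀ m, zs m ∈ Metric.ball (0:ℂ) 1)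
    (δ : ℝ) (hδ : 0 < δ) (hsep : ∀ n m, n ≠ m → δ ≤ pd (zs n) (zs m))
    (z : ℂ) (hzb : z ∈ Metric.ball (0:ℂ) 1) (r : ℝ) (hr0 : 0 < r) (hr1 : r < 1) :
    {m : ℕ | pd z (zs m) < r}.Finite ∧
      ({m : ℕ | pd z (zs m) < r}.ncard : ℝ) ≤ (2/δ + 1)^2 * (1/(1 - r^2)) := by
  have hza : ‖z‖ < 1 := by simpa [mem_ball_zero_iff] using hzb
  have hzsa : ∀ m, ‖zs m‖ < 1 := fun m => by simpa [mem_ball_zero_iff] using hz m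
  -- δ < 1
  have hδ1 : δ < 1 := lt_of_le_of_lt (hsep 0 1 (by norm_num)) (pd_lt_one_s2 _ _ (hzsa 0) (hzsa 1))
  set t : ℝ := δ / 2 with ht
  have ht0 : 0 < t := by positivity
  have ht1 : t < 1 := by rw [ht]; linarith
  set r' : ℝ := (r + t) / (1 + r * t) with hr'
  have hrt0 : (0:ℝ) < 1 + r * t := by nlinarith
  have hr'0 : 0 < r' := by positivity
  have hr'1 : r' < 1 := by
    rw [hr', div_lt_one hrt0]; nlinarith
  set S := {m : ℕ | pd z (zs m) < r} with hS
  set E : ℕ → Set ℂ := fun m => mob (zs m) '' Metric.ball (0:ℂ) t with hE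
  set E' : Set ℂ := mob z '' Metric.ball (0:ℂ) r' with hE'
  -- containment
  have hcont : ∀ m ∈ S, E m ⊆ E' := by
    intro m hm ζ hζ
    rw [hE, mem_mob_image _ _ (hzsa m) t ht1.le] at hζ
    obtain ⟨hζ1, hζ2⟩ := hζ
    rw [hE', mem_mob_image _ _ hza r' hr'1.le]
    refine ⟨hζ1, ?_⟩
    have htri := pd_triangle ζ z (zs m) hζ1 hza (hzsa m)
    have hA : pd ζ (zs m) < t := hζ2
    have hB : pd (zs m) z < r := by rw [pd_symm]; exact hm
    have h1 := pd_nonneg ζ (zs m)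
    have h2 := pd_nonneg (zs m) z
    have h3 := pd_nonneg ζ z
    have h4 := pd_lt_one_s2 ζ z hζ1 hza
    rw [hr', lt_div_iff₀ hrt0]
    have h5 : 0 < (t - pd ζ (zs m)) * (1 - pd ζ z * pd (zs m) z) := by
      apply _root_.mul_pos (by linarith)
      nlinarith
    have h6 : (0:ℝ) ≤ (r - pd (zs m) z) * (1 - pd ζ z * t) := by
      apply mul_nonneg (by linarith)
      nlinarith
    nlinarith [htri, h5, h6]
  -- disjointness
  have hdisj : ∀ m n : ℕ, m ≠ n → Disjoint (E m) (E n) := by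
    intro m n hmn
    rw [Set.disjoint_left]
    intro ζ hζm hζn
    rw [hE, mem_mob_image _ _ (hzsa m) t ht1.le] at hζm
    rw [hE, mem_mob_image _ _ (hzsa n) t ht1.le] at hζn
    have htri := pd_triangle (zs m) (zs n) ζ (hzsa m) (hzsa n) hζm.1
    have hs := hsep m n hmn
    have h1 := pd_nonneg (zs m) ζ
    have h2 := pd_nonneg ζ (zs n)
    have h3 := pd_nonneg (zs m) (zs n)
    have hA : pd (zs m) ζ < t := by rw [pd_symm]; exact hζm.2
    have hB : pd ζ (zs n) < t := hζn.2
    nlinarith [mul_nonneg h3 (mul_nonneg h1 h2)]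
  -- measures
  have hEm : ∀ m, hypm (E m) = ENNReal.ofReal (Real.pi * t^2 / (1 - t^2)) := by
    intro m
    rw [hE, hypm_mob_image _ (hzsa m) t ht0.le ht1, hypm_ball t ht0.le ht1]
  have hE'm : hypm E' = ENNReal.ofReal (Real.pi * r'^2 / (1 - r'^2)) := by
    rw [hE', hypm_mob_image _ hza r' hr'0.le hr'1, hypm_ball r' hr'0.le hr'1]
  set c0 : ℝ := Real.pi * t^2 / (1 - t^2) with hc0
  set C0 : ℝ := Real.pi * r'^2 / (1 - r'^2) with hC0
  have hr2 : (0:ℝ) < 1 - r^2 := by nlinarith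
  have ht2 : (0:ℝ) < 1 - t^2 := by nlinarith
  have hr'2pos : (0:ℝ) < 1 - r'^2 := by nlinarith
  have hc0pos : 0 < c0 := by
    rw [hc0]; have := Real.pi_pos
    apply div_pos (by positivity) ht2
  have hC0pos : 0 < C0 := by
    rw [hC0]; have := Real.pi_pos
    apply div_pos (by positivity) hr'2pos
  -- finset counting
  have hcard : ∀ F : Finset ℕ, ↑F ⊆ S → (F.card : ℝ) * c0 ≤ C0 := by
    intro F hF
    have hmeas : ∀ m ∈ F, MeasurableSet (E m) := fun m _ => isOpen_mob_image _ (hzsa m) t ht1.le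
    have hpd : (↑F : Set ℕ).PairwiseDisjoint E := by
      intro m hm n hn hmn
      exact hdisj m n hmn
    have hunion : hypm (⋃ m ∈ F, E m) = ∑ m ∈ F, hypm (E m) :=
      measure_biUnion_finset hpd hmeas
    have hsub : (⋃ m ∈ F, E m) ⊆ E' := by
      apply Set.iUnion₂_subset
      intro m hm
      exact hcont m (hF hm)
    have hle : ∑ m ∈ F, hypm (E m) ≤ hypm E' := hunion ▸ measure_mono hsub
    rw [hE'm] at hle
    have : ∑ m ∈ F, hypm (E m) = (F.card : ℝ≥0∞) * ENNReal.ofReal c0 := by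
      rw [Finset.sum_congr rfl (fun m _ => hEm m), Finset.sum_const, nsmul_eq_mul]
    rw [this] at hle
    have hle2 : ENNReal.ofReal ((F.card : ℝ) * c0) ≤ ENNReal.ofReal C0 := by
      rwa [ENNReal.ofReal_mul (by positivity), ENNReal.ofReal_natCast]
    exact (ENNReal.ofReal_le_ofReal_iff hC0pos.le).mp hle2
  have hbound : ∀ F : Finset ℕ, ↑F ⊆ S → (F.card : ℝ) ≤ C0 / c0 := by
    intro F hF
    rw [le_div_iff₀ hc0pos]
    exact hcard F hF
  -- finiteness
  have hfin : S.Finite := by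
    by_contra hinf
    have hinf' : S.Infinite := hinf
    obtain ⟨F, hFsub, hFcard⟩ := hinf'.exists_subset_card_eq (⌈C0 / c0⌉₊ + 1)
    have := hbound F hFsub
    rw [hFcard] at this
    have h1 : (C0 / c0) ≤ (⌈C0 / c0⌉₊ : ℝ) := Nat.le_ceil _
    push_cast at this
    linarith
  refine ⟨hfin, ?_⟩
  -- final bound
  have hncard : (S.ncard : ℝ) ≤ C0 / c0 := by
    have h1 := hbound hfin.toFinset (by simp)
    have h2 : S.ncard = hfin.toFinset.card := Set.ncard_eq_toFinset_card S hfin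
    rw [h2]
    exact h1
  have harith := final_arith t r ht0 ht1 hr0 hr1
  have hre : (2/δ + 1) = (1+t)/t := by
    rw [ht]; field_simp
  calc (S.ncard : ℝ) ≤ C0 / c0 := hncard
    _ ≤ (2/δ + 1)^2 * (1/(1 - r^2)) := by
        rw [hC0, hc0, hr', hre]
        exact harith
end
end

section
/- Let A be a Banach space of analytic functions on the unit disc, Γ = (z_k) a sequence of distinct points in D, X a Banach sequence space, and R_Γ the map f ↦ (f(z_k)). Assume: (1) each standard basis sequence e^{(k)} belongs to X; (2) each coordinate projection P_k is bounded on X with sup_k ‖P_k‖ < ∞; (3) there is C_A such that whenever f ∈ A with f(z_k) = 0, the function f/M_{z_k} belongs to A and ‖f/M_{z_k}‖_A ≤ C_A ‖f‖_A, where M_a(z) = (a-z)/(1-conj(a)z); (4) convergence in A implies pointwise convergence on Γ. If R_Γ(A) = X then Γ is uniformly discrete. -/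
open MeasureTheory Complex

noncomputable section

theorem stmt9
    {A : Type*} [NormedAddCommGroup A] [NormedSpace ℂ A] [CompleteSpace A]
    {X : Type*} [NormedAddCommGroup X] [NormedSpace ℂ X] [CompleteSpace X]
    -- A is a Banach space of analytic functions on the disc
    (ι : A →ₗ[ℂ] (ℂ → ℂ)) (hιinj : Function.Injective ι)
    (hι : ∀ f : A, AnalyticOn ℂ (ι f) (Metric.ball 0 1))
    -- X is a Banach space of sequences
    (jX : X →ₗ[ℂ] (ℕ → ℂ)) (hjXinj : Function.Injective jX)
    -- Γ is a sequence of distinct points of the disc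
    (zs : ℕ → ℂ) (hzs : ∀ k, zs k ∈ Metric.ball (0:ℂ) 1) (hdist : Function.Injective zs)
    -- (1) each standard basis sequence belongs to X
    (h1 : ∀ k : ℕ, ∃ x : X, jX x = fun n => if n = k then 1 else 0)
    -- (2) coordinate projections are uniformly bounded on X
    (P : ℕ → X →L[ℂ] X)
    (hP : ∀ (k : ℕ) (x : X), jX (P k x) = fun n => if n = k then jX x k else 0)
    (hPbdd : ∃ M : ℝ, ∀ k, ‖P k‖ ≤ M)
    -- (3) division by the Möbius factor M_{z_k}
    (CA : ℝ)
    (h3 : ∀ (k : ℕ) (f : A), ι f (zs k) = 0 →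
      ∃ g : A, (∀ z ∈ Metric.ball (0:ℂ) 1,
          ι f z = ((zs k - z) / (1 - (starRingEnd ℂ) (zs k) * z)) * ι g z) ∧
        ‖g‖ ≤ CA * ‖f‖)
    -- (4) convergence in A implies pointwise convergence on Γ
    (h4 : ∀ k : ℕ, Continuous fun f : A => ι f (zs k))
    -- R_Γ(A) = X
    (honto : ∀ x : X, ∃ f : A, ∀ k, ι f (zs k) = jX x k)
    (hinto : ∀ f : A, ∃ x : X, ∀ k, jX x k = ι f (zs k)) :
    ∃ δ > 0, ∀ n m, n ≠ m → δ ≤ pd (zs n) (zs m) := by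
  classical
  obtain ⟨Mb, hMb⟩ := hPbdd
  have hMb0 : 0 ≤ Mb := le_trans (norm_nonneg (P 0)) (hMb 0)
  choose e he using h1
  have hene : ∀ k, e k ≠ 0 := by
    intro k hk
    have h0 := congrFun (he k) k
    rw [hk] at h0
    simp at h0
  have henorm : ∀ k, 0 < ‖e k‖ := fun k => norm_pos_iff.mpr (hene k)
  -- P k x = (jX x k) • e k
  have hPx : ∀ k (x : X), P k x = jX x k • e k := by
    intro k x
    apply hjXinj
    rw [_root_.map_smul, hP, he]
    funext n
    by_cases h : n = k <;> simp [h]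
  -- coefficient bound
  have hcoef : ∀ k (x : X), ‖jX x k‖ * ‖e k‖ ≤ Mb * ‖x‖ := by
    intro k x
    have h1' : ‖P k x‖ = ‖jX x k‖ * ‖e k‖ := by
      rw [hPx k x, norm_smul]
    calc ‖jX x k‖ * ‖e k‖ = ‖P k x‖ := h1'.symm
      _ ≤ ‖P k‖ * ‖x‖ := (P k).le_opNorm x
      _ ≤ Mb * ‖x‖ := mul_le_mul_of_nonneg_right (hMb k) (norm_nonneg x)
  -- the coefficient functionals are continuous
  have hcoefcont : ∀ k, Continuous fun x : X => jX x k := by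
    intro k
    have hb : ∀ x : X, ‖jX x k‖ ≤ (Mb / ‖e k‖) * ‖x‖ := by
      intro x
      rw [div_mul_eq_mul_div, le_div_iff₀ (henorm k)]
      exact hcoef k x
    let φ : X →ₗ[ℂ] ℂ :=
      { toFun := fun x => jX x k
        map_add' := fun a b => by simp
        map_smul' := fun c a => by simp }
    exact (φ.mkContinuous (Mb / ‖e k‖) hb).continuous
  -- construct the restriction operator R : A → X
  choose Rf hRf using hinto
  let R₀ : A →ₗ[ℂ] X :=
    { toFun := Rf
      map_add' := fun a b => by
        apply hjXinj; funext k
        simp only [hRf, LinearMap.map_add, Pi.add_apply]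
      map_smul' := fun c a => by
        apply hjXinj; funext k
        simp only [hRf, LinearMap.map_smul, Pi.smul_apply, RingHom.id_apply] }
  have hR₀cont : Continuous R₀ := by
    apply R₀.continuous_of_seq_closed_graph
    intro u x y hu hRu
    apply hjXinj; funext k
    have h1t : Filter.Tendsto (fun n => jX (R₀ (u n)) k) Filter.atTop (nhds (jX y k)) :=
      ((hcoefcont k).tendsto y).comp hRu
    have h2t : Filter.Tendsto (fun n => ι (u n) (zs k)) Filter.atTop (nhds (ι x (zs k))) :=
      ((h4 k).tendsto x).comp hu
    have heq : (fun n => jX (R₀ (u n)) k) = fun n => ι (u n) (zs k) := by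
      funext n; exact hRf (u n) k
    rw [heq] at h1t
    have : jX y k = ι x (zs k) := tendsto_nhds_unique h1t h2t
    rw [this]; exact (hRf x k).symm
  let R : A →L[ℂ] X := ⟨R₀, hR₀cont⟩
  have hRapp : ∀ (f : A) (k : ℕ), jX (R f) k = ι f (zs k) := fun f k => hRf f k
  have hRsurj : Function.Surjective R := by
    intro x
    obtain ⟨f, hf⟩ := honto x
    refine ⟨f, hjXinj ?_⟩
    funext k
    rw [hRapp f k, hf k]
  obtain ⟨C, hC0, hC⟩ := R.exists_preimage_norm_le hRsurj
  set K := Mb * ‖R‖ * CA * C with hK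
  refine ⟨1 / max K 1, by positivity, ?_⟩
  intro n m hnm
  obtain ⟨f, hf, hfn⟩ := hC (e n)
  have hfval : ∀ k, ι f (zs k) = if k = n then 1 else 0 := by
    intro k
    rw [← hRapp f k, hf, he]
  have hfm : ι f (zs m) = 0 := by rw [hfval m, if_neg hnm.symm]
  obtain ⟨g, hg, hgnorm⟩ := h3 m f hfm
  -- f ≠ 0, so CA ≥ 0
  have hf0 : f ≠ 0 := by
    intro h0
    apply hene n
    rw [← hf, h0, map_zero]
  have hfpos : 0 < ‖f‖ := norm_pos_iff.mpr hf0
  have hCA0 : 0 ≤ CA := by nlinarith [le_trans (norm_nonneg g) hgnorm, hfpos]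
  -- evaluate at zs n
  have hval : (1 : ℂ) = ((zs m - zs n) / (1 - (starRingEnd ℂ) (zs m) * zs n)) * ι g (zs n) := by
    rw [← hg (zs n) (hzs n), hfval n, if_pos rfl]
  -- pd equals the abs of the Möbius factor
  have hpd : pd (zs n) (zs m) =
      ‖(zs m - zs n) / (1 - (starRingEnd ℂ) (zs m) * zs n)‖ := by
    rw [pd, norm_div]
    congr 1
    rw [← norm_neg, neg_sub]
  -- the key bound on |ι g (zs n)|
  have hb : ‖ι g (zs n)‖ ≤ K := by
    have h1' : ‖ι g (zs n)‖ * ‖e n‖ ≤ Mb * ‖R g‖ := by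
      rw [← hRapp g n]; exact hcoef n (R g)
    have h2' : Mb * ‖R g‖ ≤ Mb * (‖R‖ * ‖g‖) :=
      mul_le_mul_of_nonneg_left (R.le_opNorm g) hMb0
    have h3' : Mb * (‖R‖ * ‖g‖) ≤ Mb * (‖R‖ * (CA * ‖f‖)) :=
      mul_le_mul_of_nonneg_left
        (mul_le_mul_of_nonneg_left hgnorm (norm_nonneg R)) hMb0
    have h4' : Mb * (‖R‖ * (CA * ‖f‖)) ≤ Mb * (‖R‖ * (CA * (C * ‖e n‖))) := by
      apply mul_le_mul_of_nonneg_left _ hMb0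
      apply mul_le_mul_of_nonneg_left _ (norm_nonneg R)
      exact mul_le_mul_of_nonneg_left hfn hCA0
    have hchain : ‖ι g (zs n)‖ * ‖e n‖ ≤ K * ‖e n‖ := by
      calc ‖ι g (zs n)‖ * ‖e n‖ ≤ Mb * (‖R‖ * (CA * (C * ‖e n‖))) :=
            le_trans h1' (le_trans h2' (le_trans h3' h4'))
        _ = K * ‖e n‖ := by ring
    exact le_of_mul_le_mul_right hchain (henorm n)
  -- conclude
  have h1eq : (1 : ℝ) = pd (zs n) (zs m) * ‖ι g (zs n)‖ := by
    rw [hpd, ← norm_mul, ← hval, norm_one]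
  rw [div_le_iff₀ (lt_of_lt_of_le one_pos (le_max_right K 1))]
  calc (1 : ℝ) = pd (zs n) (zs m) * ‖ι g (zs n)‖ := h1eq
    _ ≤ pd (zs n) (zs m) * K := by
        apply mul_le_mul_of_nonneg_left hb
        rw [hpd]; positivity
    _ ≤ pd (zs n) (zs m) * max K 1 := by
        apply mul_le_mul_of_nonneg_left (le_max_left K 1)
        rw [hpd]; positivity
end
end

section
/- Let 0<p,q<∞. Let Γ = (z_m) and Γ' = (z'_m) be sequences in the unit disc with no limit points in the disc such that ρ(z_m,z'_m) < δ for all m. If δ < 1/20 then every sequence (a_m) ∈ l^{p,q}(Γ) also belongs to l^{p,q}(Γ'), with ‖(a_m)‖_{l^{p,q}(Γ')}^q ≤ 3 β^{-(1+q/p)} C_{q/p} ‖(a_m)‖_{l^{p,q}(Γ)}^q where C_α = max{1, 3^{α-1}}. -/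
open MeasureTheory Complex

noncomputable section

/-- The radii `r_j = 1 - β^j` with `β = 1/L`. -/
def rn (L : ℕ) (j : ℕ) : ℝ := 1 - ((1:ℝ)/L) ^ j

/-- The `q`-th power of the mixed sequence norm of `(a_m)` relative to points `(w_m)`:
the terms are grouped according to the annulus `A_j` containing `w_m`. -/
def lnorm (p q : ℝ) (L : ℕ) (a : ℕ → ℂ) (w : ℕ → ℂ) : ENNReal :=
  ∑' j : ℕ, (ENNReal.ofReal (((1:ℝ)/L) ^ j)) ^ (1 + q/p) *
    (∑' m : ℕ, if rn L j ≤ ‖w m‖ ∧ ‖w m‖ < rn L (j+1)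
      then ENNReal.ofReal (‖a m‖ ^ p) else 0) ^ (q/p)

/-! ### Auxiliary material -/

lemma pd_nonneg_s14 (z w : ℂ) : 0 ≤ pd z w := by
  unfold pd; positivity

lemma pd_symm_s14 (z w : ℂ) : pd z w = pd w z := by
  unfold pd
  have h2 : ‖1 - (starRingEnd ℂ) w * z‖ = ‖1 - (starRingEnd ℂ) z * w‖ := by
    rw [← Complex.norm_conj (1 - (starRingEnd ℂ) w * z)]
    congr 1
    simp only [map_sub, map_one, map_mul, Complex.conj_conj]
    ring
  rw [norm_sub_rev, h2]

lemma ratio_bound {z w : ℂ} (hz : ‖z‖ < 1) (hw : ‖w‖ < 1)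
    {δ : ℝ} (hδ1 : δ < 1) (h : pd z w < δ) :
    1 - ‖w‖ ≤ (1 + δ) / (1 - δ) * (1 - ‖z‖) := by
  have hδ0 : 0 ≤ δ := le_trans (pd_nonneg_s14 z w) h.le
  set D : ℂ := 1 - (starRingEnd ℂ) w * z with hD
  have hDpos : 0 < ‖D‖ := by
    have h1 : ‖(starRingEnd ℂ) w * z‖ < 1 := by
      rw [norm_mul, Complex.norm_conj]
      calc ‖w‖ * ‖z‖ ≤ 1 * ‖z‖ :=
            mul_le_mul_of_nonneg_right hw.le (norm_nonneg z)
        _ < 1 := by simpa using hz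
    have := norm_sub_norm_le (1 : ℂ) ((starRingEnd ℂ) w * z)
    simp only [norm_one] at this
    linarith
  have hzw : ‖z - w‖ < δ * ‖D‖ := by
    rw [pd, div_lt_iff₀ hDpos] at h; linarith [h]
  have hDle : ‖D‖ ≤ 2 * (1 - ‖z‖) + ‖z - w‖ := by
    have e2 : (starRingEnd ℂ) D = (1 - z * (starRingEnd ℂ) z) + (z - w) * (starRingEnd ℂ) z := by
      rw [hD]; simp only [map_sub, map_one, map_mul, Complex.conj_conj]; ring
    have e3 : ‖D‖
        = ‖(1 - z * (starRingEnd ℂ) z) + (z - w) * (starRingEnd ℂ) z‖ := by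
      rw [← e2, Complex.norm_conj]
    have e4 : (1 : ℂ) - z * (starRingEnd ℂ) z = ((1 - ‖z‖ ^ 2 : ℝ) : ℂ) := by
      rw [Complex.mul_conj']
      push_cast
      simp
    calc ‖D‖
        ≤ ‖1 - z * (starRingEnd ℂ) z‖ + ‖(z - w) * (starRingEnd ℂ) z‖ := by
          rw [e3]; exact norm_add_le _ _
      _ ≤ 2 * (1 - ‖z‖) + ‖z - w‖ := by
          have a1 : ‖1 - z * (starRingEnd ℂ) z‖ = 1 - ‖z‖ ^ 2 := by
            rw [e4, Complex.norm_real, Real.norm_eq_abs]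
            exact abs_of_nonneg (by nlinarith [norm_nonneg z])
          have a2 : ‖(z - w) * (starRingEnd ℂ) z‖ ≤ ‖z - w‖ := by
            rw [norm_mul, Complex.norm_conj]
            calc ‖z - w‖ * ‖z‖ ≤ ‖z - w‖ * 1 :=
                  mul_le_mul_of_nonneg_left hz.le (norm_nonneg _)
              _ = ‖z - w‖ := mul_one _
          have : 1 - ‖z‖ ^ 2 ≤ 2 * (1 - ‖z‖) := by
            nlinarith [norm_nonneg z]
          linarith
  have hd2 : ‖z - w‖ * (1 - δ) ≤ 2 * δ * (1 - ‖z‖) := by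
    nlinarith [hzw, hDle]
  have hwz : 1 - ‖w‖ ≤ (1 - ‖z‖) + ‖z - w‖ := by
    have := norm_sub_norm_le z w
    linarith
  rw [div_mul_eq_mul_div, le_div_iff₀ (by linarith : (0:ℝ) < 1 - δ)]
  nlinarith [hwz, hd2]

lemma ann_iff (L : ℕ) (j : ℕ) (A : ℝ) :
    (rn L j ≤ A ∧ A < rn L (j+1)) ↔ (((1:ℝ)/L) ^ (j+1) < 1 - A ∧ 1 - A ≤ ((1:ℝ)/L) ^ j) := by
  unfold rn; constructor <;> rintro ⟨h1, h2⟩ <;> constructor <;> linarith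

lemma exists_ann {β : ℝ} (hβ0 : 0 < β) (hβ1 : β < 1) {A : ℝ} (hA0 : 0 ≤ A) (hA : A < 1) :
    ∃ j : ℕ, β ^ (j+1) < 1 - A ∧ 1 - A ≤ β ^ j := by
  have ht : (0:ℝ) < 1 - A := by linarith
  have hex : ∃ n : ℕ, β ^ n < 1 - A := exists_pow_lt_of_lt_one ht hβ1
  have hspec := Nat.find_spec hex
  have hne : Nat.find hex ≠ 0 := by
    intro h0
    rw [h0, pow_zero] at hspec
    linarith
  obtain ⟨j, hj⟩ := Nat.exists_eq_succ_of_ne_zero hne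
  refine ⟨j, ?_, ?_⟩
  · rw [← Nat.succ_eq_add_one, ← hj]; exact hspec
  · by_contra hc
    push_neg at hc
    exact Nat.find_min hex (by omega : j < Nat.find hex) hc

lemma shift_le {β K : ℝ} (hβ0 : 0 < β) (hβ1 : β < 1) (hK : 0 < K) (hβK : β * K < 1)
    {i j : ℕ} {x y : ℝ}
    (hx2 : x ≤ β ^ i) (hy : β ^ (j+1) < y) (hxy : y ≤ K * x) : i ≤ j + 1 := by
  have hKx : 0 < K * x := lt_trans (pow_pos hβ0 (j+1)) (lt_of_lt_of_le hy hxy)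
  have hx0 : 0 < x := by nlinarith
  have key : β ^ (j+2) < β ^ i :=
    calc β ^ (j+2) = β * β ^ (j+1) := by ring
      _ < β * y := by nlinarith
      _ ≤ β * (K * x) := by nlinarith
      _ ≤ (β * K) * (β ^ i) := by nlinarith [mul_pos hβ0 hK]
      _ < 1 * β ^ i := by nlinarith [pow_pos hβ0 i]
      _ = β ^ i := one_mul _
  have := (pow_lt_pow_iff_right_of_lt_one₀ hβ0 hβ1).mp key
  omega

lemma triple_rpow {α : ℝ} (hα : 0 < α) (x y z : ENNReal) :
    (x + y + z) ^ α ≤ ENNReal.ofReal (max 1 ((3:ℝ) ^ (α - 1))) * (x ^ α + y ^ α + z ^ α) := by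
  rcases le_or_gt α 1 with hle | hgt
  · have h1 : (x + y + z) ^ α ≤ x ^ α + y ^ α + z ^ α := by
      calc (x + y + z) ^ α ≤ (x + y) ^ α + z ^ α :=
            ENNReal.rpow_add_le_add_rpow _ _ hα.le hle
        _ ≤ x ^ α + y ^ α + z ^ α := by
            gcongr
            exact ENNReal.rpow_add_le_add_rpow _ _ hα.le hle
    calc (x + y + z) ^ α ≤ x ^ α + y ^ α + z ^ α := h1
      _ = 1 * (x ^ α + y ^ α + z ^ α) := (one_mul _).symm
      _ ≤ _ := by
          gcongr
          rw [← ENNReal.ofReal_one]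
          exact ENNReal.ofReal_le_ofReal (le_max_left _ _)
  · have h3 : ENNReal.ofReal ((3:ℝ) ^ (α - 1)) = (3 : ENNReal) ^ (α - 1) := by
      rw [← ENNReal.ofReal_rpow_of_pos (by norm_num : (0:ℝ) < 3)]
      norm_num
    have hmax : ENNReal.ofReal (max 1 ((3:ℝ) ^ (α - 1))) = (3 : ENNReal) ^ (α - 1) := by
      rw [max_eq_right, h3]
      exact Real.one_le_rpow (by norm_num) (by linarith)
    rw [hmax]
    have h := ENNReal.rpow_arith_mean_le_arith_mean_rpow Finset.univ
      ![(3:ENNReal)⁻¹, 3⁻¹, 3⁻¹] ![3*x, 3*y, 3*z]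
      (by simp [Fin.sum_univ_three]
          rw [← ENNReal.mul_inv_cancel (by norm_num : (3:ENNReal) ≠ 0) (by norm_num)]
          ring) hgt.le
    simp only [Fin.sum_univ_three] at h
    have hinv : ∀ u : ENNReal, (3:ENNReal)⁻¹ * (3 * u) = u := by
      intro u
      rw [← mul_assoc, ENNReal.inv_mul_cancel (by norm_num) (by norm_num), one_mul]
    simp only [Matrix.cons_val_zero, Matrix.cons_val_one, Matrix.head_cons,
      Matrix.cons_val_two, Matrix.tail_cons] at h
    rw [hinv, hinv, hinv] at h
    have hmul : ∀ u : ENNReal, (3:ENNReal)⁻¹ * (3 * u) ^ α = (3:ENNReal) ^ (α - 1) * u ^ α := by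
      intro u
      rw [ENNReal.mul_rpow_of_nonneg _ _ hα.le, ENNReal.rpow_sub _ _ (by norm_num) (by norm_num),
        ENNReal.rpow_one, ENNReal.div_eq_inv_mul]
      ring
    rw [hmul, hmul, hmul] at h
    calc (x + y + z) ^ α ≤ _ := h
      _ = (3:ENNReal) ^ (α - 1) * (x ^ α + y ^ α + z ^ α) := by ring

/-- The summand of `lnorm` for a single point. -/
def annF (p : ℝ) (L : ℕ) (a w : ℕ → ℂ) (j m : ℕ) : ENNReal :=
  if rn L j ≤ ‖w m‖ ∧ ‖w m‖ < rn L (j+1)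
    then ENNReal.ofReal (‖a m‖ ^ p) else 0

/-- The inner sum of `lnorm` over the annulus `A_j`. -/
def annS (p : ℝ) (L : ℕ) (a w : ℕ → ℂ) (j : ℕ) : ENNReal := ∑' m, annF p L a w j m

/-- The weight of the annulus `A_j`. -/
def wgt (q p : ℝ) (L : ℕ) (j : ℕ) : ENNReal :=
  (ENNReal.ofReal (((1:ℝ)/L) ^ j)) ^ (1 + q/p)

lemma lnorm_eq (p q : ℝ) (L : ℕ) (a w : ℕ → ℂ) :
    lnorm p q L a w = ∑' j : ℕ, wgt q p L j * (annS p L a w j) ^ (q/p) := rfl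

lemma annF_le (p : ℝ) (L : ℕ) (hL : 2 ≤ L) (a zs zs' : ℕ → ℂ)
    (hzlt : ∀ m, ‖zs m‖ < 1) (hzlt' : ∀ m, ‖zs' m‖ < 1)
    {δ : ℝ} (hδ0 : 0 < δ) (hδ : δ < 1/20) (hpert : ∀ m, pd (zs m) (zs' m) < δ)
    (j m : ℕ) :
    annF p L a zs' j m ≤
      (if j = 0 then 0 else annF p L a zs (j-1) m) + annF p L a zs j m
        + annF p L a zs (j+1) m := by
  by_cases hc : rn L j ≤ ‖zs' m‖ ∧ ‖zs' m‖ < rn L (j+1)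
  · have hL2 : (2:ℝ) ≤ (L:ℝ) := by exact_mod_cast hL
    set β : ℝ := (1:ℝ)/L with hβdef
    have hβ0 : 0 < β := by rw [hβdef]; positivity
    have hβ1 : β < 1 := by rw [hβdef, div_lt_one (by linarith)]; linarith
    have hβh : β ≤ 1/2 := by
      rw [hβdef, div_le_div_iff₀ (by linarith) (by norm_num)]; linarith
    have hδ1 : δ < 1 := by linarith
    set K : ℝ := (1 + δ) / (1 - δ) with hKdef
    have hK0 : 0 < K := div_pos (by linarith) (by linarith)
    have hK2 : K < 2 := by rw [hKdef, div_lt_iff₀ (by linarith)]; linarith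
    have hβK : β * K < 1 := by nlinarith
    obtain ⟨i, hi1, hi2⟩ := exists_ann hβ0 hβ1 (norm_nonneg (zs m)) (hzlt m)
    have hiF : rn L i ≤ ‖zs m‖ ∧ ‖zs m‖ < rn L (i+1) :=
      (ann_iff L i _).mpr ⟨hi1, hi2⟩
    have hj' := (ann_iff L j _).mp hc
    have hr1 : 1 - ‖zs' m‖ ≤ K * (1 - ‖zs m‖) :=
      ratio_bound (hzlt m) (hzlt' m) hδ1 (hpert m)
    have hr2 : 1 - ‖zs m‖ ≤ K * (1 - ‖zs' m‖) :=
      ratio_bound (hzlt' m) (hzlt m) hδ1 (by rw [pd_symm_s14]; exact hpert m)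
    have s1 : i ≤ j + 1 := shift_le hβ0 hβ1 hK0 hβK hi2 hj'.1 hr1
    have s2 : j ≤ i + 1 := shift_le hβ0 hβ1 hK0 hβK hj'.2 hi1 hr2
    have hval : annF p L a zs' j m = ENNReal.ofReal (‖a m‖ ^ p) := if_pos hc
    have hFi : annF p L a zs i m = ENNReal.ofReal (‖a m‖ ^ p) := if_pos hiF
    rw [hval]
    rcases (by omega : i = j + 1 ∨ i = j ∨ j = i + 1) with h | h | h
    · rw [h] at hFi
      exact le_add_left (le_of_eq hFi.symm)
    · rw [h] at hFi
      exact le_add_right (le_add_left (le_of_eq hFi.symm))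
    · have hj0 : j ≠ 0 := by omega
      rw [if_neg hj0]
      have hji : j - 1 = i := by omega
      rw [hji]
      exact le_add_right (le_add_right (le_of_eq hFi.symm))
  · have : annF p L a zs' j m = 0 := if_neg hc
    rw [this]
    exact bot_le

theorem stmt14 (p q : ℝ) (hp : 0 < p) (hq : 0 < q) (L : ℕ) (hL : 2 ≤ L)
    (zs zs' : ℕ → ℂ)
    (hz : ∀ m, zs m ∈ Metric.ball (0:ℂ) 1) (hz' : ∀ m, zs' m ∈ Metric.ball (0:ℂ) 1)
    -- no limit points in the disc
    (hnl : ∀ z ∈ Metric.ball (0:ℂ) 1, ¬ MapClusterPt z Filter.atTop zs)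
    (hnl' : ∀ z ∈ Metric.ball (0:ℂ) 1, ¬ MapClusterPt z Filter.atTop zs')
    (δ : ℝ) (hδ0 : 0 < δ) (hδ : δ < 1/20)
    (hpert : ∀ m, pd (zs m) (zs' m) < δ)
    (a : ℕ → ℂ) :
    lnorm p q L a zs' ≤
      ENNReal.ofReal (3 * ((1:ℝ)/L) ^ (-(1 + q/p)) * max 1 ((3:ℝ) ^ (q/p - 1))) *
        lnorm p q L a zs := by
  have hα : 0 < q / p := div_pos hq hp
  have hL2 : (2:ℝ) ≤ (L:ℝ) := by exact_mod_cast hL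
  have hβ0 : (0:ℝ) < 1/L := by positivity
  have hβ1 : (1:ℝ)/L ≤ 1 := by rw [div_le_one (by linarith)]; linarith
  have hzlt : ∀ m, ‖zs m‖ < 1 := fun m => by
    have := hz m; rwa [Metric.mem_ball, dist_zero_right] at this
  have hzlt' : ∀ m, ‖zs' m‖ < 1 := fun m => by
    have := hz' m; rwa [Metric.mem_ball, dist_zero_right] at this
  -- abbreviations
  set Cα : ENNReal := ENNReal.ofReal (max 1 ((3:ℝ) ^ (q/p - 1))) with hCα
  set Bp : ENNReal := (ENNReal.ofReal ((1:ℝ)/L)) ^ (1 + q/p) with hBp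
  set c : ENNReal := (ENNReal.ofReal ((1:ℝ)/L)) ^ (-(1 + q/p)) with hc
  have hB0 : ENNReal.ofReal ((1:ℝ)/L) ≠ 0 := (ENNReal.ofReal_pos.mpr hβ0).ne'
  have hBtop : ENNReal.ofReal ((1:ℝ)/L) ≠ ⊤ := ENNReal.ofReal_ne_top
  have hcBp : c * Bp = 1 := by
    rw [hc, hBp, ← ENNReal.rpow_add _ _ hB0 hBtop, neg_add_cancel, ENNReal.rpow_zero]
  have hBp1 : Bp ≤ 1 := by
    rw [hBp]
    calc (ENNReal.ofReal ((1:ℝ)/L)) ^ (1 + q/p) ≤ (1:ENNReal) ^ (1 + q/p) :=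
          ENNReal.rpow_le_rpow (ENNReal.ofReal_le_one.mpr hβ1) (by positivity)
      _ = 1 := ENNReal.one_rpow _
  have hc1 : (1:ENNReal) ≤ c :=
    calc (1:ENNReal) = c * Bp := hcBp.symm
      _ ≤ c * 1 := mul_le_mul_right hBp1 c
      _ = c := mul_one c
  have hWsucc : ∀ k : ℕ, wgt q p L (k+1) = wgt q p L k * Bp := by
    intro k
    rw [wgt, wgt, hBp, pow_succ, ENNReal.ofReal_mul (by positivity),
      ENNReal.mul_rpow_of_nonneg _ _ (by positivity : (0:ℝ) ≤ 1 + q/p)]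
  have hWle : ∀ k : ℕ, wgt q p L (k+1) ≤ wgt q p L k := by
    intro k
    rw [hWsucc k]
    calc wgt q p L k * Bp ≤ wgt q p L k * 1 := mul_le_mul_right hBp1 _
      _ = wgt q p L k := mul_one _
  have hWc : ∀ k : ℕ, wgt q p L k = c * wgt q p L (k+1) := by
    intro k
    rw [hWsucc k]
    calc wgt q p L k = wgt q p L k * (c * Bp) := by rw [hcBp, mul_one]
      _ = c * (wgt q p L k * Bp) := by ring
  set S : ℕ → ENNReal := fun j => annS p L a zs j with hS
  set N : ENNReal := ∑' j, wgt q p L j * (S j) ^ (q/p) with hN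
  have hNeq : lnorm p q L a zs = N := lnorm_eq p q L a zs
  -- the per-annulus comparison
  have hT : ∀ j, annS p L a zs' j ≤
      (if j = 0 then 0 else S (j-1)) + S j + S (j+1) := by
    intro j
    calc annS p L a zs' j
        ≤ ∑' m, ((if j = 0 then 0 else annF p L a zs (j-1) m) + annF p L a zs j m
            + annF p L a zs (j+1) m) :=
          ENNReal.tsum_le_tsum (fun m => annF_le p L hL a zs zs' hzlt hzlt' hδ0 hδ hpert j m)
      _ = (∑' m, (if j = 0 then 0 else annF p L a zs (j-1) m)) + S j + S (j+1) := by
          rw [ENNReal.tsum_add, ENNReal.tsum_add]; rfl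
      _ = (if j = 0 then 0 else S (j-1)) + S j + S (j+1) := by
          split <;> simp [hS, annS]
  -- main computation
  have main : lnorm p q L a zs' ≤ Cα * (c * N + c * N + c * N) := by
    rw [lnorm_eq]
    have step1 : ∑' j, wgt q p L j * (annS p L a zs' j) ^ (q/p)
        ≤ ∑' j, wgt q p L j * (Cα * (((if j = 0 then 0 else S (j-1))) ^ (q/p)
            + (S j) ^ (q/p) + (S (j+1)) ^ (q/p))) := by
      apply ENNReal.tsum_le_tsum
      intro j
      apply mul_le_mul_right
      calc (annS p L a zs' j) ^ (q/p)
          ≤ ((if j = 0 then 0 else S (j-1)) + S j + S (j+1)) ^ (q/p) :=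
            ENNReal.rpow_le_rpow (hT j) hα.le
        _ ≤ _ := triple_rpow hα _ _ _
    refine le_trans step1 ?_
    have step2 : ∑' j, wgt q p L j * (Cα * (((if j = 0 then 0 else S (j-1))) ^ (q/p)
            + (S j) ^ (q/p) + (S (j+1)) ^ (q/p)))
        = Cα * ((∑' j, wgt q p L j * ((if j = 0 then 0 else S (j-1))) ^ (q/p))
            + (∑' j, wgt q p L j * (S j) ^ (q/p))
            + (∑' j, wgt q p L j * (S (j+1)) ^ (q/p))) := by
      rw [← ENNReal.tsum_add, ← ENNReal.tsum_add, ← ENNReal.tsum_mul_left]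
      apply tsum_congr
      intro j
      ring
    rw [step2]
    apply mul_le_mul_right
    have hA1 : (∑' j, wgt q p L j * ((if j = 0 then 0 else S (j-1))) ^ (q/p)) ≤ c * N := by
      rw [tsum_eq_zero_add' ENNReal.summable]
      simp only [reduceIte, Nat.add_eq_zero, one_ne_zero, and_false, if_false,
        Nat.add_sub_cancel]
      rw [ENNReal.zero_rpow_of_pos hα, mul_zero, zero_add]
      calc ∑' k, wgt q p L (k+1) * (S k) ^ (q/p)
          ≤ ∑' k, wgt q p L k * (S k) ^ (q/p) :=
            ENNReal.tsum_le_tsum (fun k => mul_le_mul_left (hWle k) _)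
        _ = N := hN.symm
        _ = 1 * N := (one_mul N).symm
        _ ≤ c * N := mul_le_mul_left hc1 N
    have hA2 : (∑' j, wgt q p L j * (S j) ^ (q/p)) ≤ c * N := by
      rw [← hN]
      calc N = 1 * N := (one_mul N).symm
        _ ≤ c * N := mul_le_mul_left hc1 N
    have hA3 : (∑' j, wgt q p L j * (S (j+1)) ^ (q/p)) ≤ c * N := by
      have e : ∀ j : ℕ, wgt q p L j * (S (j+1)) ^ (q/p)
          = c * (wgt q p L (j+1) * (S (j+1)) ^ (q/p)) := by
        intro j
        rw [hWc j]; ring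
      calc (∑' j, wgt q p L j * (S (j+1)) ^ (q/p))
          = ∑' j, c * (wgt q p L (j+1) * (S (j+1)) ^ (q/p)) := tsum_congr e
        _ = c * ∑' j, wgt q p L (j+1) * (S (j+1)) ^ (q/p) := ENNReal.tsum_mul_left
        _ ≤ c * N := by
            apply mul_le_mul_right
            rw [hN]
            exact ENNReal.tsum_comp_le_tsum_of_injective (fun _ _ h => Nat.succ_injective h)
              (fun j => wgt q p L j * (S j) ^ (q/p))
    exact add_le_add (add_le_add hA1 hA2) hA3
  have hconst : ENNReal.ofReal (3 * ((1:ℝ)/L) ^ (-(1 + q/p)) * max 1 ((3:ℝ) ^ (q/p - 1)))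
      = 3 * c * Cα := by
    rw [ENNReal.ofReal_mul (by positivity), ENNReal.ofReal_mul (by norm_num)]
    rw [← ENNReal.ofReal_rpow_of_pos hβ0, ← hc, ← hCα]
    norm_num
  rw [hconst, hNeq]
  calc lnorm p q L a zs' ≤ Cα * (c * N + c * N + c * N) := main
    _ = 3 * c * Cα * N := by ring
end
end
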